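/- Assume the data is of Heisenberg type, and define u(g) = log N(g) for g ≠ e. Then for every g ∈ G with g ≠ e one has |Xu(g)|² 𝓛u(g) + (Q−2) 𝓛_∞u(g) = 0, i.e. u is Q-harmonic on G ∖ {e}. -/

import Mathlib

open scoped RealInnerProductSpace
open MeasureTheory

noncomputable section

variable {V₁ V₂ : Type*} [NormedAddCommGroup V₁] [InnerProductSpace ℝ V₁]
  [NormedAddCommGroup V₂] [InnerProductSpace ℝ V₂]

/-- The horizontal derivative of `f : V₁ × V₂ → ℝ` at `g = (z,t)` in the horizontal
direction `v ∈ V₁`, namely `Df(g)(v, ½[z,v])`. -/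
def Xd (b : V₁ →ₗ[ℝ] V₁ →ₗ[ℝ] V₂) (v : V₁) (f : V₁ × V₂ → ℝ) (g : V₁ × V₂) : ℝ :=
  fderiv ℝ f g (v, (2⁻¹ : ℝ) • b g.1 v)

/-- The horizontal gradient: the unique vector of `V₁` representing the linear functional
`v ↦ X_v f (g)` via the inner product of `V₁`. -/
def Xgrad [FiniteDimensional ℝ V₁] [FiniteDimensional ℝ V₂]
    (b : V₁ →ₗ[ℝ] V₁ →ₗ[ℝ] V₂) (f : V₁ × V₂ → ℝ) (g : V₁ × V₂) : V₁ :=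
  (InnerProductSpace.toDual ℝ V₁).symm
    (LinearMap.toContinuousLinearMap
      ((fderiv ℝ f g).toLinearMap.comp
        (LinearMap.prod LinearMap.id ((2⁻¹ : ℝ) • b g.1))))

/-- The symmetrized second horizontal derivative `f_{,uv} = ½(X_u X_v f + X_v X_u f)`. -/
def X2sym (b : V₁ →ₗ[ℝ] V₁ →ₗ[ℝ] V₂) (u v : V₁) (f : V₁ × V₂ → ℝ) (g : V₁ × V₂) : ℝ :=
  (Xd b u (Xd b v f) g + Xd b v (Xd b u f) g) / 2

/-- The horizontal (sub-)Laplacian `𝓛 f = Σᵢ X_{eᵢ} X_{eᵢ} f`. -/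
def hLap [FiniteDimensional ℝ V₁] (b : V₁ →ₗ[ℝ] V₁ →ₗ[ℝ] V₂) (f : V₁ × V₂ → ℝ)
    (g : V₁ × V₂) : ℝ :=
  ∑ i, Xd b (stdOrthonormalBasis ℝ V₁ i) (Xd b (stdOrthonormalBasis ℝ V₁ i) f) g

/-- The horizontal ∞-Laplacian `𝓛_∞ f = Σ_{i,j} f_{,eᵢeⱼ} X_{eᵢ}f X_{eⱼ}f`. -/
def hInfLap [FiniteDimensional ℝ V₁] (b : V₁ →ₗ[ℝ] V₁ →ₗ[ℝ] V₂) (f : V₁ × V₂ → ℝ)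
    (g : V₁ × V₂) : ℝ :=
  ∑ i, ∑ j, X2sym b (stdOrthonormalBasis ℝ V₁ i) (stdOrthonormalBasis ℝ V₁ j) f g *
    Xd b (stdOrthonormalBasis ℝ V₁ i) f g * Xd b (stdOrthonormalBasis ℝ V₁ j) f g

/-- `ψ(z,t) = |z|²`. -/
def psiF (g : V₁ × V₂) : ℝ := ‖g.1‖ ^ 2

/-- `χ(z,t) = |t|²`. -/
def chiF (g : V₁ × V₂) : ℝ := ‖g.2‖ ^ 2

/-- `a(z,t) = ψ² + 16χ = |z|⁴ + 16|t|²`. -/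
def aF (g : V₁ × V₂) : ℝ := psiF g ^ 2 + 16 * chiF g

/-- The Folland–Kaplan gauge `N = a^{1/4}`. -/
def Ng (g : V₁ × V₂) : ℝ := aF g ^ ((1 : ℝ) / 4)

/-- `A(z,t) = |z|² z + 4 J(t) z`. -/
def Ag (J : V₂ → V₁ →ₗ[ℝ] V₁) (g : V₁ × V₂) : V₁ :=
  ‖g.1‖ ^ 2 • g.1 + (4 : ℝ) • J g.2 g.1

/-- The group law `(z,t)·(z',t') = (z+z', t+t'+½[z,z'])`. -/
def gmul (b : V₁ →ₗ[ℝ] V₁ →ₗ[ℝ] V₂) (g h : V₁ × V₂) : V₁ × V₂ :=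
  (g.1 + h.1, g.2 + h.2 + (2⁻¹ : ℝ) • b g.1 h.1)

/-- The group inverse `(z,t)⁻¹ = (−z,−t)`. -/
def ginv (g : V₁ × V₂) : V₁ × V₂ := (-g.1, -g.2)

end


set_option linter.unusedSectionVars false
set_option maxHeartbeats 1000000

noncomputable section AuxHType

open scoped RealInnerProductSpace

variable {V₁ V₂ : Type*} [NormedAddCommGroup V₁] [InnerProductSpace ℝ V₁]
  [NormedAddCommGroup V₂] [InnerProductSpace ℝ V₂] [FiniteDimensional ℝ V₁]
  [FiniteDimensional ℝ V₂]

/-- Auxiliary weight: `h_v(z,t) = ⟪z,z⟫⟪z,v⟫ + 4⟪t, b z v⟫`, so that `X_v u = a⁻¹ h_v`. -/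
def hF (b : V₁ →ₗ[ℝ] V₁ →ₗ[ℝ] V₂) (v : V₁) (g : V₁ × V₂) : ℝ :=
  ⟪g.1, g.1⟫ * ⟪g.1, v⟫ + 4 * ⟪g.2, b g.1 v⟫

theorem aF_eq : (aF (V₁ := V₁) (V₂ := V₂)) =
    fun g : V₁ × V₂ => ⟪g.1, g.1⟫ * ⟪g.1, g.1⟫ + 16 * ⟪g.2, g.2⟫ := by
  funext g; simp [aF, psiF, chiF, real_inner_self_eq_norm_sq]; ring

theorem aF_diff (g : V₁ × V₂) : DifferentiableAt ℝ (aF (V₁ := V₁) (V₂ := V₂)) g := by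
  rw [aF_eq]
  exact (((differentiableAt_fst.inner ℝ differentiableAt_fst).mul
      (differentiableAt_fst.inner ℝ differentiableAt_fst)).add
    ((differentiableAt_snd.inner ℝ differentiableAt_snd).const_mul 16))

theorem aF_fd (g : V₁ × V₂) (w : V₁) (s : V₂) :
    fderiv ℝ (aF (V₁ := V₁) (V₂ := V₂)) g (w, s) = 4 * ‖g.1‖^2 * ⟪g.1, w⟫ + 32 * ⟪g.2, s⟫ := by
  have hq1 : HasFDerivAt (fun g : V₁ × V₂ => ⟪g.1, g.1⟫)
      ((fderivInnerCLM ℝ (g.1, g.1)).comp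
        ((ContinuousLinearMap.fst ℝ V₁ V₂).prod (ContinuousLinearMap.fst ℝ V₁ V₂))) g :=
    hasFDerivAt_fst.inner ℝ hasFDerivAt_fst
  have hq2 : HasFDerivAt (fun g : V₁ × V₂ => ⟪g.2, g.2⟫)
      ((fderivInnerCLM ℝ (g.2, g.2)).comp
        ((ContinuousLinearMap.snd ℝ V₁ V₂).prod (ContinuousLinearMap.snd ℝ V₁ V₂))) g :=
    hasFDerivAt_snd.inner ℝ hasFDerivAt_snd
  have key := (hq1.mul hq1).add (hq2.const_mul 16)
  rw [aF_eq, HasFDerivAt.fderiv (f := fun g : V₁ × V₂ => ⟪g.1, g.1⟫ * ⟪g.1, g.1⟫ + 16 * ⟪g.2, g.2⟫) key]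
  simp [real_inner_self_eq_norm_sq, real_inner_comm g.1 w, real_inner_comm g.2 s]
  ring

theorem hF_diff (b : V₁ →ₗ[ℝ] V₁ →ₗ[ℝ] V₂) (v : V₁) (g : V₁ × V₂) :
    DifferentiableAt ℝ (hF b v) g := by
  have hbv : Differentiable ℝ (fun g : V₁ × V₂ => b g.1 v) := by
    have : (fun g : V₁ × V₂ => b g.1 v) =
        fun g : V₁ × V₂ => (LinearMap.toContinuousLinearMap (b.flip v)) g.1 := by
      funext g; simp
    rw [this]
    exact (LinearMap.toContinuousLinearMap (b.flip v)).differentiable.comp differentiable_fst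
  exact ((differentiableAt_fst.inner ℝ differentiableAt_fst).mul
      (differentiableAt_fst.inner ℝ (differentiableAt_const v))).add
    ((differentiableAt_snd.inner ℝ (hbv g)).const_mul 4)

theorem hF_fd (b : V₁ →ₗ[ℝ] V₁ →ₗ[ℝ] V₂) (v : V₁) (g : V₁ × V₂) (w : V₁) (s : V₂) :
    fderiv ℝ (hF b v) g (w, s) =
      2 * ⟪g.1, w⟫ * ⟪g.1, v⟫ + ⟪g.1, g.1⟫ * ⟪w, v⟫ + 4 * ⟪s, b g.1 v⟫ + 4 * ⟪g.2, b w v⟫ := by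
  have hq1 : HasFDerivAt (fun g : V₁ × V₂ => ⟪g.1, g.1⟫)
      ((fderivInnerCLM ℝ (g.1, g.1)).comp
        ((ContinuousLinearMap.fst ℝ V₁ V₂).prod (ContinuousLinearMap.fst ℝ V₁ V₂))) g :=
    hasFDerivAt_fst.inner ℝ hasFDerivAt_fst
  have hp : HasFDerivAt (fun g : V₁ × V₂ => ⟪g.1, v⟫)
      ((fderivInnerCLM ℝ (g.1, v)).comp
        ((ContinuousLinearMap.fst ℝ V₁ V₂).prod 0)) g :=
    hasFDerivAt_fst.inner ℝ (hasFDerivAt_const v g)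
  have hbC : HasFDerivAt (fun g : V₁ × V₂ => b g.1 v)
      ((LinearMap.toContinuousLinearMap (b.flip v)).comp (ContinuousLinearMap.fst ℝ V₁ V₂)) g := by
    have : (fun g : V₁ × V₂ => b g.1 v) =
        ((LinearMap.toContinuousLinearMap (b.flip v)).comp (ContinuousLinearMap.fst ℝ V₁ V₂)) := by
      funext g; simp
    rw [this]
    exact ContinuousLinearMap.hasFDerivAt _
  have hr : HasFDerivAt (fun g : V₁ × V₂ => ⟪g.2, b g.1 v⟫)
      ((fderivInnerCLM ℝ (g.2, b g.1 v)).comp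
        ((ContinuousLinearMap.snd ℝ V₁ V₂).prod
          ((LinearMap.toContinuousLinearMap (b.flip v)).comp (ContinuousLinearMap.fst ℝ V₁ V₂)))) g :=
    hasFDerivAt_snd.inner ℝ hbC
  have key := (hq1.mul hp).add (hr.const_mul 4)
  have : hF b v = fun g : V₁ × V₂ => ⟪g.1, g.1⟫ * ⟪g.1, v⟫ + 4 * ⟪g.2, b g.1 v⟫ := rfl
  rw [this, HasFDerivAt.fderiv (f := fun g : V₁ × V₂ => ⟪g.1, g.1⟫ * ⟪g.1, v⟫ + 4 * ⟪g.2, b g.1 v⟫) key]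
  simp [real_inner_comm g.1 w]
  ring

theorem aF_pos (g : V₁ × V₂) (hg : g ≠ 0) : 0 < aF g := by
  have h : g.1 ≠ 0 ∨ g.2 ≠ 0 := by
    by_contra h; push_neg at h; exact hg (Prod.ext h.1 h.2)
  unfold aF psiF chiF
  rcases h with h | h
  · have h1 : 0 < (‖g.1‖ ^ 2) ^ 2 := pow_pos (pow_pos (norm_pos_iff.mpr h) 2) 2
    nlinarith [sq_nonneg ‖g.2‖]
  · have h1 : 0 < ‖g.2‖ ^ 2 := pow_pos (norm_pos_iff.mpr h) 2
    nlinarith [sq_nonneg (‖g.1‖ ^ 2)]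

theorem u_ev (u : V₁ × V₂ → ℝ) (hu : ∀ g : V₁ × V₂, g ≠ (0, 0) → u g = Real.log (Ng g))
    (g : V₁ × V₂) (hg : g ≠ 0) :
    u =ᶠ[nhds g] (fun g' => (4 : ℝ)⁻¹ * Real.log (aF g')) := by
  apply Filter.eventuallyEq_of_mem (isOpen_compl_singleton.mem_nhds hg)
  intro g' hg'
  have hg' : g' ≠ 0 := hg'
  have : u g' = Real.log (Ng g') := hu g' (by rw [Prod.mk_zero_zero]; exact hg')
  rw [this, Ng, Real.log_rpow (aF_pos g' hg')]
  norm_num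

theorem Xd_u (b : V₁ →ₗ[ℝ] V₁ →ₗ[ℝ] V₂) (u : V₁ × V₂ → ℝ)
    (hu : ∀ g : V₁ × V₂, g ≠ (0, 0) → u g = Real.log (Ng g))
    (g : V₁ × V₂) (hg : g ≠ 0) (v : V₁) :
    Xd b v u g = (aF g)⁻¹ * hF b v g := by
  have hane := (aF_pos g hg).ne'
  have key : HasFDerivAt (fun g' : V₁ × V₂ => (4 : ℝ)⁻¹ * Real.log (aF g'))
      ((4 : ℝ)⁻¹ • ((aF g)⁻¹ • fderiv ℝ (aF (V₁ := V₁) (V₂ := V₂)) g)) g :=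
    (((aF_diff g).hasFDerivAt).log hane).const_mul _
  rw [Xd, (u_ev u hu g hg).fderiv_eq, key.fderiv]
  simp only [ContinuousLinearMap.coe_smul', Pi.smul_apply, smul_eq_mul]
  rw [aF_fd, real_inner_smul_right, hF]
  rw [real_inner_self_eq_norm_sq]
  ring

theorem XdXd_u (b : V₁ →ₗ[ℝ] V₁ →ₗ[ℝ] V₂) (u : V₁ × V₂ → ℝ)
    (hu : ∀ g : V₁ × V₂, g ≠ (0, 0) → u g = Real.log (Ng g))
    (g : V₁ × V₂) (hg : g ≠ 0) (v w : V₁) :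
    Xd b w (Xd b v u) g =
      -(4 * ((aF g) ^ 2)⁻¹ * hF b w g * hF b v g) +
        (aF g)⁻¹ * (2 * ⟪g.1, w⟫ * ⟪g.1, v⟫ + ‖g.1‖ ^ 2 * ⟪w, v⟫ +
          2 * ⟪b g.1 w, b g.1 v⟫ + 4 * ⟪g.2, b w v⟫) := by
  have hane := (aF_pos g hg).ne'
  have hev : Xd b v u =ᶠ[nhds g] (fun g' => (aF g')⁻¹ * hF b v g') := by
    apply Filter.eventuallyEq_of_mem (isOpen_compl_singleton.mem_nhds hg)
    intro g' hg'
    exact Xd_u b u hu g' hg' v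
  have key : HasFDerivAt (fun g' : V₁ × V₂ => (aF g')⁻¹ * hF b v g')
      ((aF g)⁻¹ • fderiv ℝ (hF b v) g +
        hF b v g • ((-((aF g) ^ 2)⁻¹) • fderiv ℝ (aF (V₁ := V₁) (V₂ := V₂)) g)) g :=
    ((hasDerivAt_inv hane).comp_hasFDerivAt g ((aF_diff g).hasFDerivAt)).mul
      ((hF_diff b v g).hasFDerivAt)
  rw [Xd, hev.fderiv_eq, key.fderiv]
  simp only [ContinuousLinearMap.add_apply, ContinuousLinearMap.coe_smul', Pi.smul_apply,
    smul_eq_mul]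
  rw [aF_fd, hF_fd, real_inner_smul_right, real_inner_smul_left]
  have h4 : (4 : ℝ) * ‖g.1‖ ^ 2 * ⟪g.1, w⟫ + 32 * (2⁻¹ * ⟪g.2, b g.1 w⟫) = 4 * hF b w g := by
    rw [hF, real_inner_self_eq_norm_sq]; ring
  rw [h4, real_inner_self_eq_norm_sq]
  ring

theorem sum_inner_sq {E : Type*} [NormedAddCommGroup E] [InnerProductSpace ℝ E]
    [FiniteDimensional ℝ E] (x : E) :
    ∑ i, ⟪x, stdOrthonormalBasis ℝ E i⟫ * ⟪x, stdOrthonormalBasis ℝ E i⟫ = ‖x‖ ^ 2 := by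
  have h := (stdOrthonormalBasis ℝ E).sum_inner_mul_inner x x
  simp_rw [real_inner_comm x] at h
  rw [← real_inner_self_eq_norm_sq, ← h]

theorem sum_inner_mul {E : Type*} [NormedAddCommGroup E] [InnerProductSpace ℝ E]
    [FiniteDimensional ℝ E] (x y : E) :
    ∑ i, ⟪x, stdOrthonormalBasis ℝ E i⟫ * ⟪y, stdOrthonormalBasis ℝ E i⟫ = ⟪x, y⟫ := by
  have h := (stdOrthonormalBasis ℝ E).sum_inner_mul_inner x y
  simp_rw [real_inner_comm y] at h ⊢
  exact h

theorem bzz (b : V₁ →ₗ[ℝ] V₁ →ₗ[ℝ] V₂) (hskew : ∀ z z' : V₁, b z z' = - b z' z) (z : V₁) :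
    b z z = 0 := by
  have h := hskew z z
  have h2 : b z z + b z z = 0 := by nth_rewrite 2 [h]; simp
  have := smul_eq_zero (r := (2:ℝ)) (m := b z z)
  rw [two_smul] at this
  rcases this.mp h2 with h | h
  · norm_num at h
  · exact h

theorem Jz_inner (b : V₁ →ₗ[ℝ] V₁ →ₗ[ℝ] V₂) (hskew : ∀ z z' : V₁, b z z' = - b z' z)
    (J : V₂ → V₁ →ₗ[ℝ] V₁) (hJ : ∀ (t : V₂) (z z' : V₁), ⟪J t z, z'⟫ = ⟪b z z', t⟫)
    (t : V₂) (z : V₁) : ⟪J t z, z⟫ = 0 := by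
  rw [hJ, bzz b hskew, inner_zero_left]

theorem Jadd (b : V₁ →ₗ[ℝ] V₁ →ₗ[ℝ] V₂)
    (J : V₂ → V₁ →ₗ[ℝ] V₁) (hJ : ∀ (t : V₂) (z z' : V₁), ⟪J t z, z'⟫ = ⟪b z z', t⟫)
    (s t : V₂) (z : V₁) : J (s + t) z = J s z + J t z := by
  apply ext_inner_right ℝ
  intro w
  rw [hJ, inner_add_right, inner_add_left, hJ, hJ]

theorem JJ (b : V₁ →ₗ[ℝ] V₁ →ₗ[ℝ] V₂)
    (J : V₂ → V₁ →ₗ[ℝ] V₁) (hJ : ∀ (t : V₂) (z z' : V₁), ⟪J t z, z'⟫ = ⟪b z z', t⟫)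
    (hH : ∀ (t : V₂) (z : V₁), ‖J t z‖ = ‖t‖ * ‖z‖)
    (s t : V₂) (z : V₁) : ⟪J s z, J t z⟫ = ⟪s, t⟫ * ‖z‖ ^ 2 := by
  have q1 : ‖J s z + J t z‖ ^ 2 = ‖s + t‖ ^ 2 * ‖z‖ ^ 2 := by
    rw [← Jadd b J hJ, hH, mul_pow]
  have q2 : ‖J s z‖ ^ 2 = ‖s‖ ^ 2 * ‖z‖ ^ 2 := by rw [hH, mul_pow]
  have q3 : ‖J t z‖ ^ 2 = ‖t‖ ^ 2 * ‖z‖ ^ 2 := by rw [hH, mul_pow]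
  rw [norm_add_sq_real, q2, q3, norm_add_sq_real] at q1
  linear_combination q1 / 2

theorem binner (b : V₁ →ₗ[ℝ] V₁ →ₗ[ℝ] V₂)
    (J : V₂ → V₁ →ₗ[ℝ] V₁) (hJ : ∀ (t : V₂) (z z' : V₁), ⟪J t z, z'⟫ = ⟪b z z', t⟫)
    (z w w' : V₁) :
    ⟪b z w, b z w'⟫ =
      ∑ α, ⟪J (stdOrthonormalBasis ℝ V₂ α) z, w⟫ * ⟪J (stdOrthonormalBasis ℝ V₂ α) z, w'⟫ := by
  have h := (stdOrthonormalBasis ℝ V₂).sum_inner_mul_inner (b z w) (b z w')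
  rw [← h]
  congr 1
  funext α
  rw [hJ, hJ, real_inner_comm (stdOrthonormalBasis ℝ V₂ α) (b z w')]

theorem sum_b_sq (k : ℕ) (hdV₂ : Module.finrank ℝ V₂ = k) (b : V₁ →ₗ[ℝ] V₁ →ₗ[ℝ] V₂)
    (J : V₂ → V₁ →ₗ[ℝ] V₁) (hJ : ∀ (t : V₂) (z z' : V₁), ⟪J t z, z'⟫ = ⟪b z z', t⟫)
    (hH : ∀ (t : V₂) (z : V₁), ‖J t z‖ = ‖t‖ * ‖z‖) (z : V₁) :
    ∑ i, ⟪b z (stdOrthonormalBasis ℝ V₁ i), b z (stdOrthonormalBasis ℝ V₁ i)⟫ =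
      (k : ℝ) * ‖z‖ ^ 2 := by
  simp_rw [binner b J hJ]
  rw [Finset.sum_comm]
  have : ∀ α, (∑ i, ⟪J (stdOrthonormalBasis ℝ V₂ α) z, stdOrthonormalBasis ℝ V₁ i⟫ *
      ⟪J (stdOrthonormalBasis ℝ V₂ α) z, stdOrthonormalBasis ℝ V₁ i⟫) = ‖z‖ ^ 2 := by
    intro α
    rw [sum_inner_sq, hH, mul_pow,
      (stdOrthonormalBasis ℝ V₂).orthonormal.1 α, one_pow, one_mul]
  simp_rw [this]
  simp [Finset.card_univ, hdV₂]

theorem bzJtz (b : V₁ →ₗ[ℝ] V₁ →ₗ[ℝ] V₂)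
    (J : V₂ → V₁ →ₗ[ℝ] V₁) (hJ : ∀ (t : V₂) (z z' : V₁), ⟪J t z, z'⟫ = ⟪b z z', t⟫)
    (hH : ∀ (t : V₂) (z : V₁), ‖J t z‖ = ‖t‖ * ‖z‖) (z : V₁) (t : V₂) :
    ⟪b z (J t z), b z (J t z)⟫ = ‖t‖ ^ 2 * ‖z‖ ^ 4 := by
  rw [binner b J hJ]
  have : ∀ α, ⟪J (stdOrthonormalBasis ℝ V₂ α) z, J t z⟫ =
      ⟪stdOrthonormalBasis ℝ V₂ α, t⟫ * ‖z‖ ^ 2 := fun α => JJ b J hJ hH _ t z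
  simp_rw [this]
  have h2 : ∀ α, ⟪stdOrthonormalBasis ℝ V₂ α, t⟫ * ‖z‖ ^ 2 *
      (⟪stdOrthonormalBasis ℝ V₂ α, t⟫ * ‖z‖ ^ 2) =
      (⟪t, stdOrthonormalBasis ℝ V₂ α⟫ * ⟪t, stdOrthonormalBasis ℝ V₂ α⟫) * (‖z‖^2 * ‖z‖^2) := by
    intro α; rw [real_inner_comm]; ring
  simp_rw [h2, ← Finset.sum_mul, sum_inner_sq]
  ring

theorem hF_eq_inner (b : V₁ →ₗ[ℝ] V₁ →ₗ[ℝ] V₂)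
    (J : V₂ → V₁ →ₗ[ℝ] V₁) (hJ : ∀ (t : V₂) (z z' : V₁), ⟪J t z, z'⟫ = ⟪b z z', t⟫)
    (v : V₁) (g : V₁ × V₂) : hF b v g = ⟪Ag J g, v⟫ := by
  rw [hF, Ag, inner_add_left, real_inner_smul_left, real_inner_smul_left, hJ,
    real_inner_self_eq_norm_sq, real_inner_comm g.2]

theorem innerzA (b : V₁ →ₗ[ℝ] V₁ →ₗ[ℝ] V₂) (hskew : ∀ z z' : V₁, b z z' = - b z' z)
    (J : V₂ → V₁ →ₗ[ℝ] V₁) (hJ : ∀ (t : V₂) (z z' : V₁), ⟪J t z, z'⟫ = ⟪b z z', t⟫)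
    (g : V₁ × V₂) : ⟪g.1, Ag J g⟫ = ‖g.1‖ ^ 4 := by
  rw [Ag, inner_add_right, real_inner_smul_right, real_inner_smul_right,
    real_inner_comm (J g.2 g.1) g.1, Jz_inner b hskew J hJ, real_inner_self_eq_norm_sq]
  ring

theorem innerAA (b : V₁ →ₗ[ℝ] V₁ →ₗ[ℝ] V₂) (hskew : ∀ z z' : V₁, b z z' = - b z' z)
    (J : V₂ → V₁ →ₗ[ℝ] V₁) (hJ : ∀ (t : V₂) (z z' : V₁), ⟪J t z, z'⟫ = ⟪b z z', t⟫)
    (hH : ∀ (t : V₂) (z : V₁), ‖J t z‖ = ‖t‖ * ‖z‖) (g : V₁ × V₂) :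
    ⟪Ag J g, Ag J g⟫ = ‖g.1‖ ^ 2 * aF g := by
  rw [Ag, real_inner_add_add_self, real_inner_smul_left, real_inner_smul_right,
    real_inner_smul_left, real_inner_smul_right, real_inner_smul_left, real_inner_smul_right,
    real_inner_self_eq_norm_sq, real_inner_comm (J g.2 g.1) g.1, Jz_inner b hskew J hJ,
    real_inner_self_eq_norm_sq, hH, aF, psiF, chiF, mul_pow]
  ring

theorem bzA (b : V₁ →ₗ[ℝ] V₁ →ₗ[ℝ] V₂) (hskew : ∀ z z' : V₁, b z z' = - b z' z)
    (J : V₂ → V₁ →ₗ[ℝ] V₁) (g : V₁ × V₂) :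
    b g.1 (Ag J g) = (4 : ℝ) • b g.1 (J g.2 g.1) := by
  rw [Ag, map_add, LinearMap.map_smul, LinearMap.map_smul, bzz b hskew, smul_zero, zero_add]

theorem inner_bzA (b : V₁ →ₗ[ℝ] V₁ →ₗ[ℝ] V₂) (hskew : ∀ z z' : V₁, b z z' = - b z' z)
    (J : V₂ → V₁ →ₗ[ℝ] V₁) (hJ : ∀ (t : V₂) (z z' : V₁), ⟪J t z, z'⟫ = ⟪b z z', t⟫)
    (hH : ∀ (t : V₂) (z : V₁), ‖J t z‖ = ‖t‖ * ‖z‖) (g : V₁ × V₂) :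
    ⟪b g.1 (Ag J g), b g.1 (Ag J g)⟫ = 16 * ‖g.2‖ ^ 2 * ‖g.1‖ ^ 4 := by
  rw [bzA b hskew J, real_inner_smul_left, real_inner_smul_right, bzJtz b J hJ hH]
  ring

theorem sum_hA (b : V₁ →ₗ[ℝ] V₁ →ₗ[ℝ] V₂) (z A : V₁) (y : V₂) :
    ∑ i, ⟪A, stdOrthonormalBasis ℝ V₁ i⟫ * ⟪b z (stdOrthonormalBasis ℝ V₁ i), y⟫
      = ⟪b z A, y⟫ := by
  have hA : ∑ i, ⟪A, stdOrthonormalBasis ℝ V₁ i⟫ • stdOrthonormalBasis ℝ V₁ i = A := by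
    have := (stdOrthonormalBasis ℝ V₁).sum_repr' A
    simp_rw [real_inner_comm A] at this
    exact this
  conv_rhs => rw [← hA]
  rw [map_sum, sum_inner]
  congr 1
  funext i
  rw [LinearMap.map_smul, real_inner_smul_left]

theorem Xgrad_u (b : V₁ →ₗ[ℝ] V₁ →ₗ[ℝ] V₂) (u : V₁ × V₂ → ℝ)
    (hu : ∀ g : V₁ × V₂, g ≠ (0, 0) → u g = Real.log (Ng g))
    (J : V₂ → V₁ →ₗ[ℝ] V₁) (hJ : ∀ (t : V₂) (z z' : V₁), ⟪J t z, z'⟫ = ⟪b z z', t⟫)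
    (g : V₁ × V₂) (hg : g ≠ 0) :
    Xgrad b u g = (aF g)⁻¹ • Ag J g := by
  apply ext_inner_right ℝ
  intro v
  rw [Xgrad, InnerProductSpace.toDual_symm_apply]
  have : (LinearMap.toContinuousLinearMap
      ((fderiv ℝ u g).toLinearMap.comp
        (LinearMap.prod LinearMap.id ((2⁻¹ : ℝ) • b g.1)))) v
      = fderiv ℝ u g (v, (2⁻¹ : ℝ) • b g.1 v) := by
    simp [LinearMap.coe_toContinuousLinearMap', LinearMap.comp_apply, LinearMap.prod_apply]
  rw [this]
  have h1 : fderiv ℝ u g (v, (2⁻¹ : ℝ) • b g.1 v) = Xd b v u g := rfl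
  rw [h1, Xd_u b u hu g hg v, hF_eq_inner b J hJ, real_inner_smul_left]

theorem normXgrad (b : V₁ →ₗ[ℝ] V₁ →ₗ[ℝ] V₂) (hskew : ∀ z z' : V₁, b z z' = - b z' z)
    (J : V₂ → V₁ →ₗ[ℝ] V₁) (hJ : ∀ (t : V₂) (z z' : V₁), ⟪J t z, z'⟫ = ⟪b z z', t⟫)
    (hH : ∀ (t : V₂) (z : V₁), ‖J t z‖ = ‖t‖ * ‖z‖)
    (u : V₁ × V₂ → ℝ) (hu : ∀ g : V₁ × V₂, g ≠ (0, 0) → u g = Real.log (Ng g))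
    (g : V₁ × V₂) (hg : g ≠ 0) :
    ‖Xgrad b u g‖ ^ 2 = ‖g.1‖ ^ 2 * (aF g)⁻¹ := by
  have ha := (aF_pos g hg).ne'
  rw [← real_inner_self_eq_norm_sq, Xgrad_u b u hu J hJ g hg, real_inner_smul_left,
    real_inner_smul_right, innerAA b hskew J hJ hH]
  field_simp

theorem sum_basis_inner_self {E : Type*} [NormedAddCommGroup E] [InnerProductSpace ℝ E]
    [FiniteDimensional ℝ E] (n : ℕ) (hd : Module.finrank ℝ E = n) :
    ∑ i, ⟪stdOrthonormalBasis ℝ E i, (stdOrthonormalBasis ℝ E i : E)⟫ = (n : ℝ) := by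
  have : ∀ i, ⟪stdOrthonormalBasis ℝ E i, (stdOrthonormalBasis ℝ E i : E)⟫ = (1 : ℝ) := by
    intro i
    rw [real_inner_self_eq_norm_sq, (stdOrthonormalBasis ℝ E).orthonormal.1 i, one_pow]
  simp_rw [this]
  simp [Finset.card_univ, hd]

theorem hLap_u (m k : ℕ) (hdV₁ : Module.finrank ℝ V₁ = m) (hdV₂ : Module.finrank ℝ V₂ = k)
    (b : V₁ →ₗ[ℝ] V₁ →ₗ[ℝ] V₂) (hskew : ∀ z z' : V₁, b z z' = - b z' z)
    (J : V₂ → V₁ →ₗ[ℝ] V₁) (hJ : ∀ (t : V₂) (z z' : V₁), ⟪J t z, z'⟫ = ⟪b z z', t⟫)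
    (hH : ∀ (t : V₂) (z : V₁), ‖J t z‖ = ‖t‖ * ‖z‖)
    (u : V₁ × V₂ → ℝ) (hu : ∀ g : V₁ × V₂, g ≠ (0, 0) → u g = Real.log (Ng g))
    (g : V₁ × V₂) (hg : g ≠ 0) :
    hLap b u g = ((m : ℝ) + 2 * k - 2) * ‖g.1‖ ^ 2 * (aF g)⁻¹ := by
  classical
  have hterm : ∀ i : Fin (Module.finrank ℝ V₁),
      Xd b (stdOrthonormalBasis ℝ V₁ i) (Xd b (stdOrthonormalBasis ℝ V₁ i) u) g =
        (-(4 * ((aF g) ^ 2)⁻¹)) *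
            (⟪Ag J g, stdOrthonormalBasis ℝ V₁ i⟫ * ⟪Ag J g, stdOrthonormalBasis ℝ V₁ i⟫) +
          (2 * (aF g)⁻¹) * (⟪g.1, stdOrthonormalBasis ℝ V₁ i⟫ * ⟪g.1, stdOrthonormalBasis ℝ V₁ i⟫) +
          ((aF g)⁻¹ * ‖g.1‖ ^ 2) *
            ⟪stdOrthonormalBasis ℝ V₁ i, (stdOrthonormalBasis ℝ V₁ i : V₁)⟫ +
          (2 * (aF g)⁻¹) *
            ⟪b g.1 (stdOrthonormalBasis ℝ V₁ i), b g.1 (stdOrthonormalBasis ℝ V₁ i)⟫ := by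
    intro i
    rw [XdXd_u b u hu g hg, hF_eq_inner b J hJ, bzz b hskew, inner_zero_right]
    ring
  rw [hLap, Finset.sum_congr rfl fun i _ => hterm i]
  rw [Finset.sum_add_distrib, Finset.sum_add_distrib, Finset.sum_add_distrib,
    ← Finset.mul_sum, ← Finset.mul_sum, ← Finset.mul_sum, ← Finset.mul_sum,
    sum_inner_mul, sum_inner_mul, sum_basis_inner_self m hdV₁,
    sum_b_sq k hdV₂ b J hJ hH, innerAA b hskew J hJ hH, real_inner_self_eq_norm_sq]
  have ha := (aF_pos g hg).ne'
  field_simp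
  ring

theorem X2sym_u (b : V₁ →ₗ[ℝ] V₁ →ₗ[ℝ] V₂) (hskew : ∀ z z' : V₁, b z z' = - b z' z)
    (u : V₁ × V₂ → ℝ) (hu : ∀ g : V₁ × V₂, g ≠ (0, 0) → u g = Real.log (Ng g))
    (g : V₁ × V₂) (hg : g ≠ 0) (v w : V₁) :
    X2sym b v w u g =
      -(4 * ((aF g) ^ 2)⁻¹ * hF b v g * hF b w g) +
        (aF g)⁻¹ * (2 * ⟪g.1, v⟫ * ⟪g.1, w⟫ + ‖g.1‖ ^ 2 * ⟪v, w⟫ +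
          2 * ⟪b g.1 v, b g.1 w⟫) := by
  rw [X2sym, XdXd_u b u hu g hg w v, XdXd_u b u hu g hg v w]
  rw [hskew w v, inner_neg_right]
  rw [real_inner_comm (b g.1 w) (b g.1 v), real_inner_comm w v]
  ring

theorem hInfLap_u (k : ℕ) (hdV₂ : Module.finrank ℝ V₂ = k)
    (b : V₁ →ₗ[ℝ] V₁ →ₗ[ℝ] V₂) (hskew : ∀ z z' : V₁, b z z' = - b z' z)
    (J : V₂ → V₁ →ₗ[ℝ] V₁) (hJ : ∀ (t : V₂) (z z' : V₁), ⟪J t z, z'⟫ = ⟪b z z', t⟫)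
    (hH : ∀ (t : V₂) (z : V₁), ‖J t z‖ = ‖t‖ * ‖z‖)
    (u : V₁ × V₂ → ℝ) (hu : ∀ g : V₁ × V₂, g ≠ (0, 0) → u g = Real.log (Ng g))
    (g : V₁ × V₂) (hg : g ≠ 0) :
    hInfLap b u g = -(‖g.1‖ ^ 4 * ((aF g) ^ 2)⁻¹) := by
  classical
  have ha := (aF_pos g hg).ne'
  set a := aF g with ha_def
  set A := Ag J g with hA_def
  set e := stdOrthonormalBasis ℝ V₁ with he
  have hterm : ∀ i j : Fin (Module.finrank ℝ V₁),
      X2sym b (e i) (e j) u g * Xd b (e i) u g * Xd b (e j) u g =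
        (-(4 * (a ^ 2)⁻¹ * a⁻¹ * a⁻¹) * (⟪A, e i⟫ * ⟪A, e i⟫)) * (⟪A, e j⟫ * ⟪A, e j⟫) +
        ((2 * a⁻¹ * a⁻¹ * a⁻¹) * (⟪g.1, e i⟫ * ⟪A, e i⟫)) * (⟪g.1, e j⟫ * ⟪A, e j⟫) +
        ((a⁻¹ * ‖g.1‖ ^ 2 * a⁻¹ * a⁻¹) * ⟪A, e i⟫) * (⟪e i, e j⟫ * ⟪A, e j⟫) +
        ((2 * a⁻¹ * a⁻¹ * a⁻¹) * ⟪A, e i⟫) * (⟪A, e j⟫ * ⟪b g.1 (e i), b g.1 (e j)⟫) := by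
    intro i j
    rw [X2sym_u b hskew u hu g hg, Xd_u b u hu g hg, Xd_u b u hu g hg,
      hF_eq_inner b J hJ, hF_eq_inner b J hJ]
    simp only [← ha_def, ← hA_def]
    ring
  rw [hInfLap]
  rw [Finset.sum_congr rfl fun i _ => Finset.sum_congr rfl fun j _ => hterm i j]
  have hsplit : ∀ i : Fin (Module.finrank ℝ V₁), (∑ j,
      ((-(4 * (a ^ 2)⁻¹ * a⁻¹ * a⁻¹) * (⟪A, e i⟫ * ⟪A, e i⟫)) * (⟪A, e j⟫ * ⟪A, e j⟫) +
        ((2 * a⁻¹ * a⁻¹ * a⁻¹) * (⟪g.1, e i⟫ * ⟪A, e i⟫)) * (⟪g.1, e j⟫ * ⟪A, e j⟫) +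
        ((a⁻¹ * ‖g.1‖ ^ 2 * a⁻¹ * a⁻¹) * ⟪A, e i⟫) * (⟪e i, e j⟫ * ⟪A, e j⟫) +
        ((2 * a⁻¹ * a⁻¹ * a⁻¹) * ⟪A, e i⟫) * (⟪A, e j⟫ * ⟪b g.1 (e i), b g.1 (e j)⟫))) =
      (-(4 * (a ^ 2)⁻¹ * a⁻¹ * a⁻¹) * (⟪A, e i⟫ * ⟪A, e i⟫)) * ⟪A, A⟫ +
        ((2 * a⁻¹ * a⁻¹ * a⁻¹) * (⟪g.1, e i⟫ * ⟪A, e i⟫)) * ⟪g.1, A⟫ +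
        ((a⁻¹ * ‖g.1‖ ^ 2 * a⁻¹ * a⁻¹) * ⟪A, e i⟫) * ⟪e i, A⟫ +
        ((2 * a⁻¹ * a⁻¹ * a⁻¹) * ⟪A, e i⟫) * ⟪b g.1 (e i), b g.1 A⟫ := by
    intro i
    rw [Finset.sum_add_distrib, Finset.sum_add_distrib, Finset.sum_add_distrib,
      ← Finset.mul_sum, ← Finset.mul_sum, ← Finset.mul_sum, ← Finset.mul_sum]
    congr 1
    · congr 1
      · congr 1
        · rw [sum_inner_mul A A]
        · rw [sum_inner_mul g.1 A]
      · rw [sum_inner_mul (e i) A]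
    · congr 1
      have : ∀ j, ⟪A, e j⟫ * ⟪b g.1 (e i), b g.1 (e j)⟫ =
          ⟪A, e j⟫ * ⟪b g.1 (e j), b g.1 (e i)⟫ := by
        intro j; rw [real_inner_comm (b g.1 (e j)) (b g.1 (e i))]
      rw [Finset.sum_congr rfl fun j _ => this j, sum_hA b g.1 A (b g.1 (e i)),
        real_inner_comm (b g.1 (e i)) (b g.1 A)]
  rw [Finset.sum_congr rfl fun i _ => hsplit i]
  rw [Finset.sum_add_distrib, Finset.sum_add_distrib, Finset.sum_add_distrib]
  have e1 : (∑ i, (-(4 * (a ^ 2)⁻¹ * a⁻¹ * a⁻¹) * (⟪A, e i⟫ * ⟪A, e i⟫)) * ⟪A, A⟫) =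
      -(4 * (a ^ 2)⁻¹ * a⁻¹ * a⁻¹) * (⟪A, A⟫ * ⟪A, A⟫) := by
    have : ∀ i, (-(4 * (a ^ 2)⁻¹ * a⁻¹ * a⁻¹) * (⟪A, e i⟫ * ⟪A, e i⟫)) * ⟪A, A⟫ =
        (-(4 * (a ^ 2)⁻¹ * a⁻¹ * a⁻¹) * ⟪A, A⟫) * (⟪A, e i⟫ * ⟪A, e i⟫) := by intro i; ring
    rw [Finset.sum_congr rfl fun i _ => this i, ← Finset.mul_sum, sum_inner_mul A A]
    ring
  have e2 : (∑ i, ((2 * a⁻¹ * a⁻¹ * a⁻¹) * (⟪g.1, e i⟫ * ⟪A, e i⟫)) * ⟪g.1, A⟫) =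
      (2 * a⁻¹ * a⁻¹ * a⁻¹) * (⟪g.1, A⟫ * ⟪g.1, A⟫) := by
    have : ∀ i, ((2 * a⁻¹ * a⁻¹ * a⁻¹) * (⟪g.1, e i⟫ * ⟪A, e i⟫)) * ⟪g.1, A⟫ =
        ((2 * a⁻¹ * a⁻¹ * a⁻¹) * ⟪g.1, A⟫) * (⟪g.1, e i⟫ * ⟪A, e i⟫) := by intro i; ring
    rw [Finset.sum_congr rfl fun i _ => this i, ← Finset.mul_sum, sum_inner_mul g.1 A]
    ring
  have e3 : (∑ i, ((a⁻¹ * ‖g.1‖ ^ 2 * a⁻¹ * a⁻¹) * ⟪A, e i⟫) * ⟪e i, A⟫) =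
      (a⁻¹ * ‖g.1‖ ^ 2 * a⁻¹ * a⁻¹) * ⟪A, A⟫ := by
    have : ∀ i, ((a⁻¹ * ‖g.1‖ ^ 2 * a⁻¹ * a⁻¹) * ⟪A, e i⟫) * ⟪e i, A⟫ =
        (a⁻¹ * ‖g.1‖ ^ 2 * a⁻¹ * a⁻¹) * (⟪A, e i⟫ * ⟪A, e i⟫) := by
      intro i; rw [real_inner_comm A (e i)]; ring
    rw [Finset.sum_congr rfl fun i _ => this i, ← Finset.mul_sum, sum_inner_mul A A]
  have e4 : (∑ i, ((2 * a⁻¹ * a⁻¹ * a⁻¹) * ⟪A, e i⟫) * ⟪b g.1 (e i), b g.1 A⟫) =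
      (2 * a⁻¹ * a⁻¹ * a⁻¹) * ⟪b g.1 A, b g.1 A⟫ := by
    have : ∀ i, ((2 * a⁻¹ * a⁻¹ * a⁻¹) * ⟪A, e i⟫) * ⟪b g.1 (e i), b g.1 A⟫ =
        (2 * a⁻¹ * a⁻¹ * a⁻¹) * (⟪A, e i⟫ * ⟪b g.1 (e i), b g.1 A⟫) := by intro i; ring
    rw [Finset.sum_congr rfl fun i _ => this i, ← Finset.mul_sum,
      sum_hA b g.1 A (b g.1 A)]
  rw [e1, e2, e3, e4, innerAA b hskew J hJ hH, innerzA b hskew J hJ,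
    inner_bzA b hskew J hJ hH]
  rw [show aF g = a from ha_def.symm]
  have ha2 : a = (‖g.1‖ ^ 2) ^ 2 + 16 * ‖g.2‖ ^ 2 := by
    rw [ha_def]; simp [aF, psiF, chiF]
  rw [show 16 * ‖g.2‖ ^ 2 = a - ‖g.1‖ ^ 4 by rw [ha2]; ring]
  have hne : (‖g.1‖ ^ 2) ^ 2 + 16 * ‖g.2‖ ^ 2 ≠ 0 := by rw [← ha2]; exact ha
  field_simp
  ring

end AuxHType

theorem riesz_htype_log_N_Q_harmonic {V₁ V₂ : Type*} [NormedAddCommGroup V₁] [InnerProductSpace ℝ V₁]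
    [FiniteDimensional ℝ V₁] [NormedAddCommGroup V₂] [InnerProductSpace ℝ V₂]
    [FiniteDimensional ℝ V₂] (m k : ℕ) (hm : 1 ≤ m) (hk : 1 ≤ k)
    (hdV₁ : Module.finrank ℝ V₁ = m) (hdV₂ : Module.finrank ℝ V₂ = k)
    (b : V₁ →ₗ[ℝ] V₁ →ₗ[ℝ] V₂) (hskew : ∀ z z' : V₁, b z z' = - b z' z)
    (J : V₂ → V₁ →ₗ[ℝ] V₁) (hJ : ∀ (t : V₂) (z z' : V₁), ⟪J t z, z'⟫ = ⟪b z z', t⟫) (hH : ∀ (t : V₂) (z : V₁), ‖J t z‖ = ‖t‖ * ‖z‖)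
    (u : V₁ × V₂ → ℝ) (hu : ∀ g : V₁ × V₂, g ≠ (0, 0) → u g = Real.log (Ng g)) :
    ∀ g : V₁ × V₂, g ≠ (0, 0) →
      ‖Xgrad b u g‖ ^ 2 * hLap b u g + (((m : ℝ) + 2 * k) - 2) * hInfLap b u g = 0 := by
  intro g hg
  have hg0 : g ≠ 0 := by intro h; exact hg (by rw [h]; exact Prod.mk_zero_zero.symm)
  rw [normXgrad b hskew J hJ hH u hu g hg0,
    hLap_u m k hdV₁ hdV₂ b hskew J hJ hH u hu g hg0,
    hInfLap_u k hdV₂ b hskew J hJ hH u hu g hg0]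
  ring
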